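/- Let w be a p-string, let d be the number of distinct parameterized characters occurring in w, let x₁ < x₂ < ⋯ < x_d be the d smallest elements of Π, and let y₁, y₂, …, y_d be the distinct parameterized characters of w listed in order of their first occurrence in w. Then the string obtained from w by replacing every occurrence of y_j with x_j (for each 1 ≤ j ≤ d) and leaving static characters unchanged equals spe(w), the lexicographically smallest p-string p-matching w. -/

import Mathlib

/-- p-match over the ordered character alphabet `Lex (P ⊕ S)` (parameterized characters
`Sum.inl` are smaller than static characters `Sum.inr`). -/
def PMatch {S P : Type*} (x y : List (Lex (P ⊕ S))) : Prop :=
  ∃ f : Lex (P ⊕ S) → Lex (P ⊕ S), Function.Bijective f ∧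
    (∀ s : S, f (toLex (Sum.inr s)) = toLex (Sum.inr s)) ∧ x = y.map f

/-- `s` is the smallest parameterized encoding `spe(w)` of `w`:
the lexicographically smallest p-string p-matching `w`. -/
def IsSpe {S P : Type*} [LinearOrder S] [LinearOrder P]
    (w s : List (Lex (P ⊕ S))) : Prop :=
  PMatch s w ∧ ∀ s' : List (Lex (P ⊕ S)), PMatch s' w → s ≤ s'

instance sumLawfulBEq {α β : Type*} [BEq α] [BEq β] [LawfulBEq α] [LawfulBEq β] :
    LawfulBEq (α ⊕ β) where
  eq_of_beq {a b} h := by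
    cases a <;> cases b <;> simp only [BEq.beq] at h <;>
      first
        | (cases h)
        | (rename_i x1 x2; rw [eq_of_beq (show (x1 == x2) = true from h)])
  rfl {a} := by
    cases a <;> simp only [BEq.beq] <;> exact ReflBEq.rfl

instance lexLawfulBEq (α : Type*) [BEq α] [LawfulBEq α] : LawfulBEq (Lex α) where
  eq_of_beq h := eq_of_beq (α := α) h
  rfl {a} := @ReflBEq.rfl α _ _ (ofLex a)

/-- If `l[i]? = some a` then the first occurrence of `a` in `l` is at index `≤ i`. -/
lemma indexOf_le_of_getElem? {α : Type*} [BEq α] [LawfulBEq α] {l : List α} {i : ℕ} {a : α}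
    (h : l[i]? = some a) : l.idxOf a ≤ i := by
  induction l generalizing i with
  | nil => simp at h
  | cons b t ih =>
      rw [List.idxOf, List.findIdx_cons]
      by_cases hb : (b == a) = true
      · simp [hb]
      · simp only [hb, cond_false]
        match i with
        | 0 =>
          simp only [List.getElem?_cons_zero, Option.some.injEq] at h
          exact absurd (by simp [h]) hb
        | i + 1 =>
          have := ih (by simpa using h)
          rw [List.idxOf] at this
          omega

/-- If `a ∈ l` then `l[l.idxOf a]? = some a`. -/
lemma getElem?_indexOf' {α : Type*} [BEq α] [LawfulBEq α] {l : List α} {a : α}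
    (h : a ∈ l) : l[l.idxOf a]? = some a := by
  induction l with
  | nil => simp at h
  | cons b t ih =>
      rw [List.idxOf, List.findIdx_cons]
      by_cases hb : (b == a) = true
      · simp [eq_of_beq hb]
      · simp only [hb, cond_false]
        have hmem : a ∈ t := by
          rcases List.mem_cons.mp h with h1 | h1
          · exact absurd (by simp [h1]) hb
          · exact h1
        simpa [List.idxOf] using ih hmem

/-- First-difference extraction from a lexicographic comparison of lists. -/
lemma lex_firstdiff {α : Type*} [LT α] {a b : List α} (h : List.Lex (· < ·) a b) :
    (∃ (i : ℕ) (u v : α), (∀ k < i, a[k]? = b[k]?) ∧ a[i]? = some u ∧ b[i]? = some v ∧ u < v)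
    ∨ a.length < b.length := by
  induction h with
  | nil => right; simp
  | @rel a l b l' hab =>
      left
      exact ⟨0, a, b, fun k hk => absurd hk (Nat.not_lt_zero k), by simp, by simp, hab⟩
  | @cons a l l' _ ih =>
      rcases ih with ⟨i, u, v, hpre, hu, hv, huv⟩ | hlen
      · left
        refine ⟨i + 1, u, v, ?_, by simpa using hu, by simpa using hv, huv⟩
        intro k hk
        match k with
        | 0 => simp
        | k + 1 => simpa using hpre k (by omega)
      · right; simpa using hlen

/-- let `d` be the number of distinct parameterized characters of `w`,
`x 0 < x 1 < ⋯ < x (d-1)` the `d` smallest elements of `Π`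
(strictly monotone and downward closed in `Π`), and `y 0, …, y (d-1)` the distinct
parameterized characters of `w` listed in order of first occurrence
(all occur in `w`, every parameterized character of `w` is some `y j`, and first
occurrences are increasing).  Then the string `z` obtained from `w` by replacing each
occurrence of `y j` by `x j` and leaving static characters unchanged is `spe(w)`,
the lexicographically smallest p-string p-matching `w`. -/
theorem replacement_is_spe {S P : Type*} [LinearOrder S] [LinearOrder P]
    [WellFoundedLT P] (w z : List (Lex (P ⊕ S))) (d : ℕ) (x y : Fin d → P)
    (hx_mono : StrictMono x)
    (hx_smallest : ∀ (p : P) (j : Fin d), p < x j → ∃ j' : Fin d, x j' = p)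
    (hy_mem : ∀ j : Fin d, toLex (Sum.inl (y j)) ∈ w)
    (hy_all : ∀ p : P, toLex (Sum.inl p) ∈ w → ∃ j : Fin d, y j = p)
    (hy_firstocc : ∀ j k : Fin d, j < k →
      List.idxOf (toLex (Sum.inl (y j))) w < List.idxOf (toLex (Sum.inl (y k))) w)
    (hz_len : z.length = w.length)
    (hz_static : ∀ (i : ℕ) (s : S), w[i]? = some (toLex (Sum.inr s)) → z[i]? = w[i]?)
    (hz_param : ∀ (i : ℕ) (j : Fin d), w[i]? = some (toLex (Sum.inl (y j))) →
      z[i]? = some (toLex (Sum.inl (x j)))) :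
    IsSpe w z := by
  classical
  have hy_inj : Function.Injective y := by
    intro j k hjk
    by_contra hne
    rcases lt_or_gt_of_ne hne with h | h
    · exact absurd (hy_firstocc j k h) (by rw [hjk]; exact lt_irrefl _)
    · exact absurd (hy_firstocc k j h) (by rw [hjk]; exact lt_irrefl _)
  -- build a permutation `g` of `P` with `g (y j) = x j`
  obtain ⟨g, hg⟩ : ∃ g : P ≃ P, ∀ j : Fin d, g (y j) = x j := by
    let e : Fin d ≃ Set.range y := Equiv.ofInjective y hy_inj
    let f : Set.range y ↪ P := e.symm.toEmbedding.trans ⟨x, hx_mono.injective⟩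
    have hf : ∀ j : Fin d, f (e j) = x j := by
      intro j; simp [f, e]
    have key : ∃ g : P ≃ P, ∀ p : Set.range y, g p = f p := by
      cases finite_or_infinite P with
      | inl hfin =>
          exact Cardinal.extend_function_finite f ⟨Equiv.refl P⟩
      | inr hinf =>
          apply Cardinal.extend_function_of_lt f _ ⟨Equiv.refl P⟩
          have : Finite (Set.range y) := (Set.finite_range y).to_subtype
          exact lt_of_lt_of_le (Cardinal.lt_aleph0_of_finite _) (Cardinal.aleph0_le_mk P)
    obtain ⟨g, hg⟩ := key
    refine ⟨g, fun j => ?_⟩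
    have h1 := hg (e j)
    rw [hf] at h1
    have he : ((e j : Set.range y) : P) = y j := rfl
    rw [← h1, he]
  -- the full character bijection
  let F : Lex (P ⊕ S) ≃ Lex (P ⊕ S) :=
    (ofLex).trans ((g.sumCongr (Equiv.refl S)).trans toLex)
  have hF_inr : ∀ s : S, F (toLex (Sum.inr s)) = toLex (Sum.inr s) := fun s => rfl
  have hF_inl : ∀ p : P, F (toLex (Sum.inl p)) = toLex (Sum.inl (g p)) := fun p => rfl
  -- `z = w.map F`
  have hz_map : z = w.map F := by
    apply List.ext_getElem?
    intro i
    rcases lt_or_ge i w.length with hi | hi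
    · have hw : w[i]? = some w[i] := List.getElem?_eq_getElem hi
      rw [List.getElem?_map, hw, Option.map_some]
      rcases hsum : ofLex (w[i]) with p | s
      · have hwp : w[i] = toLex (Sum.inl p) := hsum
        obtain ⟨j, hj⟩ := hy_all p (hwp ▸ List.getElem_mem hi)
        have := hz_param i j (by rw [hw, hwp, hj])
        rw [this, hwp, hF_inl, ← hj, hg j]
      · have hws : w[i] = toLex (Sum.inr s) := hsum
        have := hz_static i s (by rw [hw, hws])
        rw [this, hw, hws, hF_inr]
    · rw [List.getElem?_eq_none (by omega), List.getElem?_eq_none (by simpa using hi)]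
  have hpm : PMatch z w := ⟨F, F.bijective, hF_inr, hz_map⟩
  refine ⟨hpm, ?_⟩
  -- minimality
  rintro s' ⟨f', hf'_bij, hf'_inr, hs'⟩
  by_contra hlt
  have hlt : List.Lex (· < ·) s' z := lt_of_not_ge hlt
  have hs'_len : s'.length = w.length := by rw [hs']; simp
  rcases lex_firstdiff hlt with ⟨i, u, v, hpre, hu, hv, huv⟩ | hlen
  · -- first difference at index `i`
    obtain ⟨hiz, hvz⟩ := List.getElem?_eq_some_iff.mp hv
    have hiw : i < w.length := by omega
    have hwi : w[i]? = some w[i] := List.getElem?_eq_getElem hiw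
    have hu' : u = f' w[i] := by
      have : s'[i]? = some (f' w[i]) := by rw [hs', List.getElem?_map, hwi]; rfl
      rw [hu] at this; exact Option.some_injective _ this
    rcases hsum : ofLex (w[i]) with p | s
    · -- parameterized character at `i`
      have hwp : w[i] = toLex (Sum.inl p) := hsum
      obtain ⟨j, hj⟩ := hy_all p (hwp ▸ List.getElem_mem hiw)
      have hvj : v = toLex (Sum.inl (x j)) := by
        have := hz_param i j (by rw [hwi, hwp, hj])
        rw [hv] at this; exact Option.some_injective _ this
      -- `u` must be a parameterized character `< x j`
      rcases husum : ofLex u with p' | s''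
      · have hup : u = toLex (Sum.inl p') := husum
        have hp' : p' < x j := by
          rw [hup, hvj] at huv
          exact Sum.Lex.inl_lt_inl_iff.mp huv
        obtain ⟨j', hj'⟩ := hx_smallest p' j hp'
        have hj'j : j' < j := hx_mono.lt_iff_lt.mp (by rw [hj']; exact hp')
        -- `i` is no earlier than the first occurrence of `y j`
        have hi0 : w.idxOf (toLex (Sum.inl (y j))) ≤ i := by
          apply indexOf_le_of_getElem?
          rw [hwi, hwp, ← hj]
        set i1 := w.idxOf (toLex (Sum.inl (y j'))) with hi1def
        have hi1 : i1 < i := lt_of_lt_of_le (hy_firstocc j' j hj'j) hi0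
        have hwi1 : w[i1]? = some (toLex (Sum.inl (y j'))) := by
          apply getElem?_indexOf'
          exact hy_mem j'
        have hzi1 : z[i1]? = some (toLex (Sum.inl (x j'))) := hz_param i1 j' hwi1
        have hsi1 : s'[i1]? = some (f' (toLex (Sum.inl (y j')))) := by
          rw [hs', List.getElem?_map, hwi1]; rfl
        have heq : f' (toLex (Sum.inl (y j'))) = toLex (Sum.inl (x j')) := by
          have := hpre i1 hi1
          rw [hsi1, hzi1] at this
          exact Option.some_injective _ this
        have heq2 : f' (toLex (Sum.inl (y j))) = toLex (Sum.inl (x j')) := by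
          rw [hj, ← hwp, ← hu', hup, hj']
        have : (toLex (Sum.inl (y j')) : Lex (P ⊕ S)) = toLex (Sum.inl (y j)) :=
          hf'_bij.injective (heq.trans heq2.symm)
        have hyy : y j' = y j := by
          simpa using congrArg ofLex this
        exact absurd (hy_inj hyy) (ne_of_lt hj'j)
      · -- static `u` cannot be below a parameterized `v`
        have hus : u = toLex (Sum.inr s'') := husum
        rw [hus, hvj] at huv
        exact Sum.Lex.not_inr_lt_inl huv
    · -- static character at `i`: `u = v`, contradiction
      have hws : w[i] = toLex (Sum.inr s) := hsum
      have hvv : v = w[i] := by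
        have := hz_static i s (by rw [hwi, hws])
        rw [hv, hwi] at this
        exact Option.some_injective _ this
      have huu : u = w[i] := by rw [hu', hws, hf'_inr s, ← hws]
      rw [huu, hvv] at huv; exact lt_irrefl _ huv
  · omega
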